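/- Let k be a field of characteristic p and F ∈ k[x_1,…,x_n]. The transvection automorphism T_F of the Weyl algebra (fixing x̂_1,…,x̂_n and sending x̂_{n+i} to x̂_{n+i} + ∂_iF(x̂_1,…,x̂_n)) acts on the central elements y_i = x̂_i^p by y_i ↦ y_i and y_{n+i} ↦ y_{n+i} + Fr(∂_iF)(y_1,…,y_n), where Fr(∂_iF) is obtained from ∂_iF by raising all coefficients to the p-th power. -/

import Mathlib

section starlemma
open Polynomial Finset

variable {k : Type*} [Field k] {R : Type*} [Ring R] [Algebra k R]

lemma star_cancel (p : ℕ) [CharP k p] (x : R) (m : ℕ) (hm0 : m ≠ 0) (hmp : m < p)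
    (h : x * (m : R) = 0) : x = 0 := by
  have hk : (m : k) ≠ 0 := by
    rw [Ne, CharP.cast_eq_zero_iff k p m]
    intro hdvd
    exact absurd (Nat.le_of_dvd (Nat.pos_of_ne_zero hm0) hdvd) (not_le.2 hmp)
  have h2 : x * algebraMap k R (m : k) = 0 := by rwa [map_natCast]
  calc x = x * algebraMap k R ((m : k) * (m : k)⁻¹) := by
        rw [mul_inv_cancel₀ hk, map_one, mul_one]
    _ = (x * algebraMap k R (m : k)) * algebraMap k R (m : k)⁻¹ := by
        rw [map_mul, mul_assoc]
    _ = 0 := by rw [h2, zero_mul]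

lemma star (p : ℕ) [hp : Fact p.Prime] [CharP k p]
    (A : R) (b : ℕ → R)
    (hAb : ∀ m, A * b m - b m * A = b (m + 1))
    (hBb : ∀ m, b 0 * b m = b m * b 0)
    (htop : b (p - 1) = 0) :
    (A + b 0) ^ p = A ^ p + b 0 ^ p := by
  have hp2 : 2 ≤ p := hp.out.two_le
  have hpR : (p : R) = 0 := by
    rw [show ((p : ℕ) : R) = algebraMap k R (p : k) from (map_natCast _ p).symm,
      CharP.cast_eq_zero k p, map_zero]
  set CC : R[X] := C A + C (b 0) * X with hCC
  -- basic commutation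
  have f1 : ∀ m, CC * C (b m) = C (b m) * CC + C (b (m + 1)) := by
    intro m
    have hA : A * b m = b m * A + b (m + 1) := by
      have h := hAb m
      have := sub_eq_iff_eq_add.mp h
      rw [this]; abel
    have hX : (X : R[X]) * C (b m) = C (b m) * X := X_mul
    have h1 : C A * C (b m) = C (b m) * C A + C (b (m + 1)) := by
      rw [← map_mul, hA, map_add, map_mul]
    have h2 : C (b 0) * C (b m) = C (b m) * C (b 0) := by
      rw [← map_mul, hBb, map_mul]
    rw [hCC, add_mul, mul_assoc (C (b 0)) X (C (b m)), hX, ← mul_assoc, h2, h1,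
      mul_add, ← mul_assoc]
    abel
  -- moving C (b 0) through powers of CC
  have f2 : ∀ j, CC ^ j * C (b 0) =
      ∑ m ∈ range (j + 1), (j.choose m) • (C (b m) * CC ^ (j - m)) := by
    intro j
    induction j with
    | zero => simp
    | succ j ih =>
      rw [pow_succ', mul_assoc, ih, Finset.mul_sum]
      have step : ∀ m ∈ range (j + 1),
          CC * ((j.choose m) • (C (b m) * CC ^ (j - m))) =
          (j.choose m) • (C (b m) * CC ^ (j + 1 - m)) +
          (j.choose m) • (C (b (m + 1)) * CC ^ (j - m)) := by
        intro m hm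
        rw [mem_range] at hm
        rw [mul_smul_comm, ← mul_assoc, f1 m, add_mul, mul_assoc, ← pow_succ',
          show j - m + 1 = j + 1 - m by omega, smul_add]
      rw [Finset.sum_congr rfl step, Finset.sum_add_distrib]
      -- now massage the RHS
      rw [Finset.sum_range_succ' _ (j + 1)]
      have hRe : ∀ m, ((j + 1).choose (m + 1)) • (C (b (m + 1)) * CC ^ (j + 1 - (m + 1))) =
          (j.choose m) • (C (b (m + 1)) * CC ^ (j - m)) +
          (j.choose (m + 1)) • (C (b (m + 1)) * CC ^ (j - m)) := by
        intro m
        rw [Nat.succ_sub_succ, Nat.choose_succ_succ, add_smul]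
      simp only [hRe]
      rw [Finset.sum_add_distrib, Nat.choose_zero_right, one_smul, Nat.sub_zero]
      -- LHS first sum: peel m = 0
      rw [Finset.sum_range_succ' (fun m => (j.choose m) • (C (b m) * CC ^ (j + 1 - m))) j]
      simp only [Nat.succ_sub_succ, Nat.choose_zero_right, one_smul, Nat.sub_zero]
      -- extend range j to range (j+1) in the first sum (top term has choose j (j+1) = 0)
      rw [show ∑ m ∈ range (j + 1), (j.choose (m + 1)) • (C (b (m + 1)) * CC ^ (j - m)) =
          ∑ m ∈ range j, (j.choose (m + 1)) • (C (b (m + 1)) * CC ^ (j - m)) + 0 by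
        rw [Finset.sum_range_succ, Nat.choose_succ_self, zero_smul]]
      abel
  -- derivative of CC
  have hdCC : derivative CC = C (b 0) := by
    rw [hCC]; simp
  -- derivative of powers of CC
  have f4 : ∀ m, derivative (CC ^ m) =
      ∑ l ∈ range m, (m.choose (l + 1)) • (C (b l) * CC ^ (m - 1 - l)) := by
    intro m
    induction m with
    | zero => simp
    | succ m ih =>
      rw [pow_succ, derivative_mul, ih, hdCC, f2 m]
      rw [Finset.sum_mul]
      have step : ∀ l ∈ range m,
          ((m.choose (l + 1)) • (C (b l) * CC ^ (m - 1 - l))) * CC =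
          (m.choose (l + 1)) • (C (b l) * CC ^ (m - l)) := by
        intro l hl
        rw [mem_range] at hl
        rw [smul_mul_assoc, mul_assoc, ← pow_succ, show m - 1 - l + 1 = m - l by omega]
      rw [Finset.sum_congr rfl step]
      have hRe : ∀ l, ((m + 1).choose (l + 1)) • (C (b l) * CC ^ (m + 1 - 1 - l)) =
          (m.choose l) • (C (b l) * CC ^ (m - l)) +
          (m.choose (l + 1)) • (C (b l) * CC ^ (m - l)) := by
        intro l
        rw [Nat.choose_succ_succ, add_smul, Nat.add_sub_cancel]
      simp only [hRe]
      rw [Finset.sum_add_distrib]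
      rw [show ∑ l ∈ range (m + 1), (m.choose (l + 1)) • (C (b l) * CC ^ (m - l)) =
          ∑ l ∈ range m, (m.choose (l + 1)) • (C (b l) * CC ^ (m - l)) + 0 by
        rw [Finset.sum_range_succ, Nat.choose_succ_self, zero_smul]]
      abel
  -- the derivative of CC ^ p vanishes
  have f5 : derivative (CC ^ p) = 0 := by
    rw [f4 p]
    refine Finset.sum_eq_zero ?_
    intro l hl
    rw [mem_range] at hl
    rcases eq_or_ne l (p - 1) with h | h
    · rw [h, htop]; simp
    · obtain ⟨t, ht⟩ : p ∣ p.choose (l + 1) :=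
        hp.out.dvd_choose_self (by omega) (by omega)
      rw [ht, mul_smul, nsmul_eq_mul]
      have : ((p : ℕ) : R[X]) = 0 := by
        rw [show ((p : ℕ) : R[X]) = C ((p : ℕ) : R) by simp, hpR, map_zero]
      rw [this, zero_mul]
  -- coefficients of CC ^ p
  have hdeg : ∀ m : ℕ, (CC ^ m).natDegree ≤ m := by
    intro m
    calc (CC ^ m).natDegree ≤ m * CC.natDegree := natDegree_pow_le
      _ ≤ m * 1 := by
          refine Nat.mul_le_mul_left m ?_
          rw [hCC]
          refine le_trans (natDegree_add_le _ _) ?_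
          simp only [natDegree_C, max_le_iff]
          refine ⟨Nat.zero_le _, le_trans (natDegree_mul_le) ?_⟩
          simp [natDegree_X_le]
      _ = m := Nat.mul_one m
  have hc0 : ∀ m : ℕ, (CC ^ m).coeff 0 = A ^ m := by
    intro m
    induction m with
    | zero => simp
    | succ m ih =>
      rw [pow_succ, mul_coeff_zero, ih, hCC]
      simp [pow_succ]
  have hctop : ∀ m : ℕ, (CC ^ m).coeff m = b 0 ^ m := by
    intro m
    induction m with
    | zero => simp
    | succ m ih =>
      have : CC ^ (m + 1) = CC ^ m * C A + CC ^ m * C (b 0) * X := by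
        rw [pow_succ, hCC, mul_add, ← mul_assoc]
      rw [this, coeff_add, coeff_mul_C, coeff_mul_X, coeff_mul_C, ih,
        coeff_eq_zero_of_natDegree_lt (lt_of_le_of_lt (hdeg m) (Nat.lt_succ_self m)),
        zero_mul, zero_add, pow_succ]
  have hcmid : ∀ j : ℕ, j ≠ 0 → j ≠ p → (CC ^ p).coeff j = 0 := by
    intro j hj0 hjp
    rcases lt_or_ge j p with hlt | hge
    · -- use the derivative
      obtain ⟨i, rfl⟩ : ∃ i, j = i + 1 := ⟨j - 1, by omega⟩
      have h := congrArg (fun q => Polynomial.coeff q i) f5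
      simp only [coeff_derivative, coeff_zero] at h
      have : (CC ^ p).coeff (i + 1) * ((i + 1 : ℕ) : R) = 0 := by
        push_cast
        exact h
      exact star_cancel (k := k) p _ (i + 1) (by omega) (by omega) this
    · exact coeff_eq_zero_of_natDegree_lt (lt_of_le_of_lt (hdeg p) (by omega))
  -- evaluation homomorphism at X = 1
  let φ : R[X] →+* R := eval₂RingHom' (RingHom.id R) 1 (fun a => Commute.one_right _)
  have hφC : ∀ a : R, φ (C a) = a := fun a => by
    simp [φ, eval₂RingHom']
  have hφX : φ X = 1 := by simp [φ, eval₂RingHom']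
  have hφCC : φ CC = A + b 0 := by
    rw [hCC, map_add, map_mul, hφC, hφC, hφX, mul_one]
  have key : φ (CC ^ p) = (A + b 0) ^ p := by rw [map_pow, hφCC]
  have expand : CC ^ p = ∑ j ∈ range (p + 1), C ((CC ^ p).coeff j) * X ^ j := by
    conv_lhs => rw [(CC ^ p).as_sum_range' (p + 1) (lt_of_le_of_lt (hdeg p) (Nat.lt_succ_self p))]
    refine Finset.sum_congr rfl ?_
    intro j _
    rw [← C_mul_X_pow_eq_monomial]
  have : φ (CC ^ p) = A ^ p + b 0 ^ p := by
    rw [expand, map_sum]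
    have term : ∀ j ∈ range (p + 1), φ (C ((CC ^ p).coeff j) * X ^ j) = (CC ^ p).coeff j := by
      intro j _
      rw [map_mul, map_pow, hφX, one_pow, mul_one, hφC]
    rw [Finset.sum_congr rfl term]
    have hsub : ({0, p} : Finset ℕ) ⊆ range (p + 1) := by
      intro x hx
      simp only [Finset.mem_insert, Finset.mem_singleton] at hx
      rcases hx with rfl | rfl
      · simp
      · simp [Nat.lt_succ_self]
    rw [← Finset.sum_subset hsub (fun x hx hnx => by
      refine hcmid x ?_ ?_ <;> intro h <;> subst h <;> simp at hnx)]
    rw [Finset.sum_pair (by omega : (0 : ℕ) ≠ p), hc0, hctop]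
  rw [← key, this]

end starlemma



open MvPolynomial

/-- `ω_{ij} = δ_{i,n+j} - δ_{n+i,j}` with the `2n` indices encoded as
`Fin n ⊕ Fin n` (`inl i ↔ x̂_i`, `inr i ↔ x̂_{n+i}`). -/
def weylOmegaS (n : ℕ) : (Fin n ⊕ Fin n) → (Fin n ⊕ Fin n) → ℤ
  | .inl i, .inr j => if i = j then 1 else 0
  | .inr i, .inl j => if i = j then -1 else 0
  | _, _ => 0

/-- The defining relations `x̂_i x̂_j - x̂_j x̂_i = ω_{ij}·1` of the Weyl algebra
`A_{n,k}`. -/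
inductive WeylRelS (k : Type*) [Field k] (n : ℕ) :
    FreeAlgebra k (Fin n ⊕ Fin n) → FreeAlgebra k (Fin n ⊕ Fin n) → Prop
  | comm (i j : Fin n ⊕ Fin n) : WeylRelS k n
      (FreeAlgebra.ι k i * FreeAlgebra.ι k j - FreeAlgebra.ι k j * FreeAlgebra.ι k i)
      ((weylOmegaS n i j : ℤ) : FreeAlgebra k (Fin n ⊕ Fin n))

/-- The Weyl algebra `A_{n,k}`. -/
abbrev WeylAlgS (k : Type*) [Field k] (n : ℕ) := RingQuot (WeylRelS k n)

/-- The generator `x̂_i` of `A_{n,k}`. -/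
noncomputable def weylGenS (k : Type*) [Field k] (n : ℕ) (i : Fin n ⊕ Fin n) :
    WeylAlgS k n :=
  RingQuot.mkAlgHom k (WeylRelS k n) (FreeAlgebra.ι k i)

/-- Substitution of the pairwise commuting elements `x̂_1, …, x̂_n` into a
polynomial `G ∈ k[x_1,…,x_n]`: `G(x̂_1,…,x̂_n) = Σ_m coeff_m · Π_i x̂_i^{m_i}`. -/
noncomputable def weylEvalS (k : Type*) [Field k] (n : ℕ)
    (G : MvPolynomial (Fin n) k) : WeylAlgS k n :=
  ∑ m ∈ G.support, G.coeff m •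
    ((List.finRange n).map fun i => weylGenS k n (Sum.inl i) ^ m i).prod


section weyl
variable (k : Type*) [Field k] (n : ℕ)

lemma weylGen_comm_rel (a b : Fin n ⊕ Fin n) :
    weylGenS k n a * weylGenS k n b - weylGenS k n b * weylGenS k n a
      = ((weylOmegaS n a b : ℤ) : WeylAlgS k n) := by
  have h := RingQuot.mkAlgHom_rel k (WeylRelS.comm (k := k) (n := n) a b)
  simpa [weylGenS, map_sub, map_mul, map_intCast] using h

lemma weylGen_inl_comm (j l : Fin n) :
    weylGenS k n (Sum.inl j) * weylGenS k n (Sum.inl l)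
      = weylGenS k n (Sum.inl l) * weylGenS k n (Sum.inl j) := by
  have h := weylGen_comm_rel k n (Sum.inl j) (Sum.inl l)
  rw [show weylOmegaS n (Sum.inl j) (Sum.inl l) = 0 from rfl] at h
  rw [← sub_eq_zero]
  simpa using h

noncomputable def weylSub : Subalgebra k (WeylAlgS k n) :=
  Algebra.adjoin k (Set.range fun j : Fin n => weylGenS k n (Sum.inl j))

noncomputable instance weylSubComm : CommSemiring (weylSub k n) :=
  { (weylSub k n).toSemiring with
    mul_comm := (Algebra.adjoinCommSemiringOfComm k (by
    rintro a ⟨j, rfl⟩ b ⟨l, rfl⟩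
    exact weylGen_inl_comm k n j l)).mul_comm }

noncomputable def evS : MvPolynomial (Fin n) k →ₐ[k] weylSub k n :=
  aeval (fun j => (⟨weylGenS k n (Sum.inl j),
    Algebra.subset_adjoin ⟨j, rfl⟩⟩ : weylSub k n))

noncomputable def evW : MvPolynomial (Fin n) k →ₐ[k] WeylAlgS k n :=
  (weylSub k n).val.comp (evS k n)

lemma evW_X (j : Fin n) : evW k n (X j) = weylGenS k n (Sum.inl j) := by
  simp [evW, evS]

lemma evW_comm (H1 H2 : MvPolynomial (Fin n) k) :
    evW k n H1 * evW k n H2 = evW k n H2 * evW k n H1 := by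
  show ((weylSub k n).val (evS k n H1)) * ((weylSub k n).val (evS k n H2)) = _
  rw [← map_mul, mul_comm, map_mul]
  rfl

lemma evW_monomial (m : Fin n →₀ ℕ) (c : k) :
    evW k n (monomial m c) =
      c • ((List.finRange n).map fun j => weylGenS k n (Sum.inl j) ^ m j).prod := by
  have h1 : (monomial m c : MvPolynomial (Fin n) k)
      = c • ∏ j : Fin n, (X j : MvPolynomial (Fin n) k) ^ m j := by
    rw [monomial_eq, Finsupp.prod_fintype _ _ (fun j => pow_zero _), smul_eq_C_mul]
  rw [h1, map_smul]
  congr 1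
  show (weylSub k n).val (evS k n _) = _
  rw [map_prod]
  have h2 : ∀ j : Fin n, evS k n ((X j : MvPolynomial (Fin n) k) ^ m j)
      = (⟨weylGenS k n (Sum.inl j), Algebra.subset_adjoin ⟨j, rfl⟩⟩ : weylSub k n) ^ m j := by
    intro j; rw [map_pow, evS, aeval_X]
  rw [Finset.prod_congr rfl (fun j _ => h2 j), Fin.prod_univ_def]
  rw [map_list_prod, List.map_map]
  simp [Function.comp_def]

lemma evW_eq (G : MvPolynomial (Fin n) k) : weylEvalS k n G = evW k n G := by
  conv_rhs => rw [← support_sum_monomial_coeff G]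
  rw [map_sum, weylEvalS]
  exact Finset.sum_congr rfl fun m _ => (evW_monomial k n m _).symm

variable {k : Type*} [Field k] {n : ℕ}

lemma ring_aux1 {R : Type*} [Ring R] (u v g : R) : -u * g + v * -1 = -(u * g) + -v := by
  noncomm_ring

lemma ring_aux2 {R : Type*} [Ring R] (u v g : R) : -u * g + v * 0 = -(u * g) := by
  noncomm_ring

lemma weyl_comm_inr_ev (i : Fin n) (H : MvPolynomial (Fin n) k) :
    weylGenS k n (Sum.inr i) * evW k n H - evW k n H * weylGenS k n (Sum.inr i)
      = evW k n (-(pderiv i H)) := by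
  induction H using MvPolynomial.induction_on with
  | C a =>
      rw [pderiv_C, neg_zero, map_zero,
        show (C a : MvPolynomial (Fin n) k) = algebraMap k _ a from rfl,
        AlgHom.commutes, Algebra.commutes, sub_self]
  | add H1 H2 ih1 ih2 =>
      rw [map_add (pderiv i), neg_add, map_add, map_add, ← ih1, ← ih2, mul_add, add_mul]
      abel
  | mul_X H j ih =>
      have hcomm : weylGenS k n (Sum.inr i) * weylGenS k n (Sum.inl j)
          - weylGenS k n (Sum.inl j) * weylGenS k n (Sum.inr i)
          = ((weylOmegaS n (Sum.inr i) (Sum.inl j) : ℤ) : WeylAlgS k n) :=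
        weylGen_comm_rel k n _ _
      have key : ∀ u v A : WeylAlgS k n,
          A * (u * v) - (u * v) * A = (A * u - u * A) * v + u * (A * v - v * A) := by
        intro u v A
        rw [sub_mul, mul_sub, mul_assoc A u v, mul_assoc u A v, mul_assoc u v A]
        abel
      rw [map_mul, evW_X, key, ih, hcomm]
      rw [show pderiv i (H * X j) = pderiv i H * X j + H * pderiv i (X j) from by
        rw [pderiv_mul]]
      rcases eq_or_ne i j with rfl | hij
      · rw [show weylOmegaS n (Sum.inr i) (Sum.inl i) = -1 from by simp [weylOmegaS]]
        rw [pderiv_X_self, mul_one, neg_add, map_add, map_neg, map_neg, map_mul, evW_X]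
        push_cast
        rw [map_neg]
        generalize (evW k n) ((pderiv i) H) = u
        generalize (evW k n) H = v
        generalize weylGenS k n (Sum.inl i) = g
        exact ring_aux1 u v g
      · rw [show weylOmegaS n (Sum.inr i) (Sum.inl j) = 0 from by
          simp [weylOmegaS, hij]]
        rw [pderiv_X_of_ne (Ne.symm hij), mul_zero, add_zero, map_neg, map_neg, map_mul, evW_X]
        push_cast
        generalize (evW k n) ((pderiv i) H) = u
        generalize (evW k n) H = v
        generalize weylGenS k n (Sum.inl j) = g
        exact ring_aux2 u v g

lemma pderiv_iterate_monomial (i : Fin n) (m : ℕ) (s : Fin n →₀ ℕ) (a : k) :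
    (fun H : MvPolynomial (Fin n) k => pderiv i H)^[m] (monomial s a)
      = monomial (s - Finsupp.single i m) ((((s i).descFactorial m : ℕ) : k) * a) := by
  induction m with
  | zero => simp
  | succ m ih =>
      rw [Function.iterate_succ_apply', ih]
      show pderiv i _ = _
      rw [pderiv_monomial]
      have he : s - Finsupp.single i m - Finsupp.single i 1 = s - Finsupp.single i (m + 1) := by
        rw [tsub_tsub, ← Finsupp.single_add]
      have hv : (s - Finsupp.single i m) i = s i - m := by
        rw [Finsupp.tsub_apply, Finsupp.single_eq_same]
      rw [he, hv, Nat.descFactorial_succ]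
      congr 1
      push_cast
      ring

lemma pderiv_iterate_add (i : Fin n) (m : ℕ) (a b : MvPolynomial (Fin n) k) :
    (fun H : MvPolynomial (Fin n) k => pderiv i H)^[m] (a + b)
      = (fun H : MvPolynomial (Fin n) k => pderiv i H)^[m] a
        + (fun H : MvPolynomial (Fin n) k => pderiv i H)^[m] b := by
  induction m generalizing a b with
  | zero => simp
  | succ m ih => rw [Function.iterate_succ_apply', Function.iterate_succ_apply',
      Function.iterate_succ_apply', ih]; simp

lemma pderiv_iterate_p (p : ℕ) [Fact p.Prime] [CharP k p] (i : Fin n)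
    (H : MvPolynomial (Fin n) k) :
    (fun H : MvPolynomial (Fin n) k => pderiv i H)^[p] H = 0 := by
  induction H using MvPolynomial.induction_on' with
  | monomial s a =>
      rw [pderiv_iterate_monomial]
      obtain ⟨t, ht⟩ : (p : ℕ) ∣ (s i).descFactorial p :=
        dvd_trans (Nat.dvd_factorial (Fact.out (p := p.Prime)).pos le_rfl)
          (Nat.factorial_dvd_descFactorial _ _)
      rw [ht]
      push_cast
      rw [CharP.cast_eq_zero k p, zero_mul, zero_mul, map_zero]
  | add H1 H2 ih1 ih2 => rw [pderiv_iterate_add, ih1, ih2, add_zero]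

lemma frobW (p : ℕ) [Fact p.Prime] [CharP k p] (G : MvPolynomial (Fin n) k) :
    evW k n G ^ p = ∑ m ∈ G.support, (G.coeff m ^ p) •
      ((List.finRange n).map fun j => (weylGenS k n (Sum.inl j) ^ p) ^ m j).prod := by
  have hGp : G ^ p = ∑ m ∈ G.support, monomial (p • m) (G.coeff m ^ p) := by
    conv_lhs => rw [← support_sum_monomial_coeff G]
    rw [sum_pow_char]
    exact Finset.sum_congr rfl fun m _ => by rw [monomial_pow]
  rw [← map_pow, hGp, map_sum]
  refine Finset.sum_congr rfl fun m _ => ?_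
  rw [evW_monomial]
  congr 1
  refine congrArg List.prod (List.map_congr_left ?_)
  intro j _
  rw [Finsupp.smul_apply, smul_eq_mul, pow_mul]

end weyl

/-- Let `k` be a field of characteristic `p` and `F ∈ k[x_1,…,x_n]`. The
transvection automorphism `T_F` of the Weyl algebra (fixing `x̂_1,…,x̂_n` and
sending `x̂_{n+i} ↦ x̂_{n+i} + ∂_iF(x̂_1,…,x̂_n)`) acts on the central elements
`y_i = x̂_i^p` by `y_i ↦ y_i` and `y_{n+i} ↦ y_{n+i} + Fr(∂_iF)(y_1,…,y_n)`,
where `Fr(∂_iF)` is obtained from `∂_iF` by raising all coefficients to the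
`p`-th power (and substituting `y_j` for `x_j`). -/
theorem stmt14 (p : ℕ) [Fact p.Prime] (k : Type*) [Field k] [CharP k p]
    (n : ℕ) (F : MvPolynomial (Fin n) k) (T : WeylAlgS k n ≃ₐ[k] WeylAlgS k n)
    (hT : ∀ i : Fin n,
      T (weylGenS k n (Sum.inl i)) = weylGenS k n (Sum.inl i) ∧
      T (weylGenS k n (Sum.inr i)) =
        weylGenS k n (Sum.inr i) + weylEvalS k n (MvPolynomial.pderiv i F)) :
    ∀ i : Fin n,
      T (weylGenS k n (Sum.inl i) ^ p) = weylGenS k n (Sum.inl i) ^ p ∧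
      T (weylGenS k n (Sum.inr i) ^ p) =
        weylGenS k n (Sum.inr i) ^ p +
          ∑ m ∈ (MvPolynomial.pderiv i F).support,
            ((MvPolynomial.pderiv i F).coeff m ^ p) •
              ((List.finRange n).map fun j =>
                (weylGenS k n (Sum.inl j) ^ p) ^ m j).prod := by
  intro i
  refine ⟨by rw [map_pow, (hT i).1], ?_⟩
  have hT2 := (hT i).2
  rw [map_pow, hT2, evW_eq]
  set A := weylGenS k n (Sum.inr i) with hA
  set G := pderiv i F with hG
  set b : ℕ → WeylAlgS k n :=
    fun m => evW k n (((-1 : k) ^ m) •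
      (fun H : MvPolynomial (Fin n) k => pderiv i H)^[m] G) with hb
  have hb0 : b 0 = evW k n G := by simp [hb]
  have hAb : ∀ m, A * b m - b m * A = b (m + 1) := by
    intro m
    rw [hb, hA]
    rw [weyl_comm_inr_ev i _]
    congr 1
    rw [Function.iterate_succ_apply']
    show -(pderiv i ((-1 : k) ^ m • _)) = (-1 : k) ^ (m + 1) • pderiv i _
    rw [Derivation.map_smul, pow_succ, mul_comm ((-1 : k) ^ m) (-1 : k), mul_smul,
      neg_one_smul]
  have hBb : ∀ m, b 0 * b m = b m * b 0 := fun m => by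
    show evW k n _ * evW k n _ = evW k n _ * evW k n _
    exact evW_comm k n _ _
  have htop : b (p - 1) = 0 := by
    have h2 : (fun H : MvPolynomial (Fin n) k => pderiv i H)^[p] F
        = (fun H : MvPolynomial (Fin n) k => pderiv i H)^[p - 1] (pderiv i F) := by
      conv_lhs => rw [show p = (p - 1) + 1 from
        (Nat.succ_pred_eq_of_pos (Fact.out (p := p.Prime)).pos).symm]
      rw [Function.iterate_succ_apply]
    have h3 : (fun H : MvPolynomial (Fin n) k => pderiv i H)^[p - 1] G = 0 := by
      rw [hG, ← h2, pderiv_iterate_p p i F]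
    show evW k n ((-1 : k) ^ (p - 1) •
      (fun H : MvPolynomial (Fin n) k => pderiv i H)^[p - 1] G) = 0
    rw [h3, smul_zero, map_zero]
  have hstar := star (k := k) p A b hAb hBb htop
  rw [hb0] at hstar
  rw [hstar, frobW p G]
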